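/- (Dobinski formula) For every natural number n, the n-th Bell number satisfies B_n = e^{−1} · Σ_{k≥0} k^n / k!, where the series on the right converges. -/

import Mathlib

open Finset

variable {α : Type*} {β : Type*} [DecidableEq α] [DecidableEq β]

lemma map_finsetSup (f : α ↪ β) (A : Finset (Finset α)) :
    (A.sup id).map f = A.sup (fun t => t.map f) := by
  induction A using Finset.induction with
  | empty => simp
  | insert _ _ _ ih => simp [Finset.sup_insert, Finset.map_union, ih]

lemma map_preimage_of_subset (f : α ↪ β) {t : Finset β} {s : Finset α} (h : t ⊆ s.map f) :
    (t.preimage f f.injective.injOn).map f = t := by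
  classical
  rw [Finset.map_eq_image, Finset.image_preimage]
  refine Finset.filter_true_of_mem fun x hx => ?_
  obtain ⟨a, _, rfl⟩ := Finset.mem_map.mp (h hx)
  exact Set.mem_range_self a

/-- Transport a finpartition of a finset along an embedding. -/
noncomputable def finpartMapEmb (f : α ↪ β) (s : Finset α) :
    Finpartition s ≃ Finpartition (s.map f) where
  toFun P :=
    { parts := P.parts.map (Finset.mapEmbedding f).toEmbedding
      supIndep := by
        rw [Finset.supIndep_iff_pairwiseDisjoint]
        rintro x hx y hy hxy
        simp only [coe_map, Set.mem_image, mem_coe, RelEmbedding.coe_toEmbedding,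
          Finset.mapEmbedding_apply] at hx hy
        obtain ⟨t, ht, rfl⟩ := hx
        obtain ⟨u, hu, rfl⟩ := hy
        exact (Finset.disjoint_map f).mpr (P.disjoint ht hu (fun h => hxy (by rw [h])))
      sup_parts := by
        rw [Finset.sup_map]
        have : (id ∘ (Finset.mapEmbedding f).toEmbedding)
            = fun t : Finset α => t.map f := by
          funext t; rfl
        rw [this, ← map_finsetSup, P.sup_parts]
      bot_notMem := by
        simp only [bot_eq_empty, mem_map, RelEmbedding.coe_toEmbedding,
          Finset.mapEmbedding_apply]
        rintro ⟨t, ht, h⟩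
        rw [Finset.map_eq_empty] at h
        subst h
        exact P.bot_notMem ht }
  invFun Q :=
    { parts := Q.parts.image (fun t => t.preimage f f.injective.injOn)
      supIndep := by
        rw [Finset.supIndep_iff_pairwiseDisjoint]
        rintro x hx y hy hxy
        simp only [coe_image, Set.mem_image, mem_coe] at hx hy
        obtain ⟨t, ht, rfl⟩ := hx
        obtain ⟨u, hu, rfl⟩ := hy
        have := Q.disjoint ht hu (fun h => hxy (by rw [h]))
        have h2 : Disjoint (t.preimage f f.injective.injOn) (u.preimage f f.injective.injOn) := by
          rw [← Finset.disjoint_map f, map_preimage_of_subset f (Q.le ht),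
            map_preimage_of_subset f (Q.le hu)]
          exact this
        exact h2
      sup_parts := by
        apply Finset.map_injective f
        rw [map_finsetSup, Finset.sup_image]
        conv_rhs => rw [← Q.sup_parts]
        exact Finset.sup_congr rfl fun t ht => map_preimage_of_subset f (Q.le ht)
      bot_notMem := by
        simp only [bot_eq_empty, mem_image]
        rintro ⟨t, ht, h⟩
        apply Q.bot_notMem
        have := map_preimage_of_subset f (Q.le ht)
        rw [h] at this
        simp only [Finset.map_empty] at this
        rwa [← this] at ht }
  left_inv P := by
    ext t
    simp only [mem_image, mem_map, RelEmbedding.coe_toEmbedding, Finset.mapEmbedding_apply]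
    constructor
    · rintro ⟨u, ⟨v, hv, rfl⟩, rfl⟩
      rwa [Finset.preimage_map]
    · intro ht
      exact ⟨t.map f, ⟨t, ht, rfl⟩, Finset.preimage_map f t⟩
  right_inv Q := by
    ext t
    simp only [mem_map, mem_image, RelEmbedding.coe_toEmbedding, Finset.mapEmbedding_apply]
    constructor
    · rintro ⟨u, ⟨v, hv, rfl⟩, rfl⟩
      rwa [map_preimage_of_subset f (Q.le hv)]
    · intro ht
      exact ⟨t.preimage f f.injective.injOn, ⟨t, ht, rfl⟩,
        map_preimage_of_subset f (Q.le ht)⟩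

/-- Reduce a finpartition of `s` to one of the universe of the subtype. -/
lemma card_finpartition_univ_subtype (s : Finset α) :
    Fintype.card (Finpartition s)
      = Fintype.card (Finpartition (univ : Finset (↥s))) := by
  have hmap : (univ : Finset (↥s)).map (Function.Embedding.subtype _) = s := by
    rw [Finset.univ_eq_attach, Finset.attach_map_val]
  have := Fintype.card_congr
    (finpartMapEmb (Function.Embedding.subtype (· ∈ s)) (univ : Finset (↥s)))
  rw [hmap] at this
  exact this.symm

/-- Finpartition cardinality only depends on the size of the finset. -/
lemma card_finpartition_congr {s : Finset α} {t : Finset β} (h : s.card = t.card) :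
    Fintype.card (Finpartition s) = Fintype.card (Finpartition t) := by
  have e : (↥s) ≃ (↥t) := by
    apply Fintype.equivOfCardEq
    simpa using h
  rw [card_finpartition_univ_subtype s, card_finpartition_univ_subtype t]
  have := Fintype.card_congr (finpartMapEmb e.toEmbedding (univ : Finset (↥s)))
  rwa [Finset.map_univ_equiv] at this

lemma finpartition_heq {γ : Type*} [DecidableEq γ] {u v : Finset γ} (h : u = v)
    {P : Finpartition u} {Q : Finpartition v} (hp : P.parts = Q.parts) : HEq P Q := by
  subst h
  rw [Finpartition.ext hp]

lemma avoid_part_parts {γ : Type*} [DecidableEq γ] {u : Finset γ} (P : Finpartition u)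
    {x : γ} (hx : x ∈ u) :
    (P.avoid (P.part x)).parts = P.parts.erase (P.part x) := by
  ext c
  rw [Finpartition.mem_avoid, Finset.mem_erase]
  constructor
  · rintro ⟨d, hd, hnle, rfl⟩
    have hne : d ≠ P.part x := by rintro rfl; exact hnle le_rfl
    have hdisj : Disjoint d (P.part x) := P.disjoint hd (P.part_mem.2 hx) hne
    rw [Finset.sdiff_eq_self_of_disjoint hdisj]
    exact ⟨hne, hd⟩
  · rintro ⟨hne, hc⟩
    have hdisj : Disjoint c (P.part x) := P.disjoint hc (P.part_mem.2 hx) hne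
    refine ⟨c, hc, ?_, Finset.sdiff_eq_self_of_disjoint hdisj⟩
    intro hle
    exact P.ne_bot hc (hdisj.eq_bot_of_le hle)

/-- A finpartition of `univ : Finset γ` is the same as a choice of the complement of the
block containing `x₀`, together with a finpartition of that complement. -/
noncomputable def finpartRec {γ : Type*} [DecidableEq γ] [Fintype γ] (x₀ : γ) :
    Finpartition (univ : Finset γ) ≃ Σ s : {s : Finset γ // x₀ ∉ s}, Finpartition s.val where
  toFun P := ⟨⟨univ \ P.part x₀, by simp [P.mem_part (mem_univ x₀)]⟩, P.avoid (P.part x₀)⟩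
  invFun x := (x.2.extend (b := univ \ x.1.val)
      (by
        simp only [bot_eq_empty, ne_eq, Finset.sdiff_eq_empty_iff_subset]
        intro h
        exact x.1.2 (h (mem_univ x₀)))
      (Finset.disjoint_sdiff)
      (by rw [Finset.sup_eq_union, Finset.union_sdiff_of_subset (Finset.subset_univ _)]))
  left_inv P := by
    apply Finpartition.ext
    have hpart : univ \ (univ \ P.part x₀) = P.part x₀ :=
      Finset.sdiff_sdiff_eq_self (P.le (P.part_mem.2 (mem_univ x₀)))
    simp only [Finpartition.extend]
    rw [hpart, avoid_part_parts P (mem_univ x₀),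
      Finset.insert_erase (P.part_mem.2 (mem_univ x₀))]
  right_inv := by
    rintro ⟨⟨s, hs⟩, Q⟩
    have hsub : s ⊆ univ := Finset.subset_univ s
    have hcompl : univ \ (univ \ s) = s := Finset.sdiff_sdiff_eq_self hsub
    set E := Q.extend (b := univ \ s) (by
        simp only [bot_eq_empty, ne_eq, Finset.sdiff_eq_empty_iff_subset]
        intro h; exact hs (h (mem_univ x₀)))
      (Finset.disjoint_sdiff)
      (by rw [Finset.sup_eq_union, Finset.union_sdiff_of_subset (Finset.subset_univ _)]) with hE
    have hmem : univ \ s ∈ E.parts := by rw [hE]; exact Finset.mem_insert_self _ _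
    have hx₀ : x₀ ∈ univ \ s := by simp [hs]
    have hpart : E.part x₀ = univ \ s := E.part_eq_of_mem hmem hx₀
    have hnotmem : univ \ s ∉ Q.parts := by
      intro h
      have := Q.le h
      have hx : x₀ ∈ s := this hx₀
      exact hs hx
    refine Sigma.ext ?_ ?_
    · apply Subtype.ext
      simp only
      rw [hpart, hcompl]
    · simp only
      refine finpartition_heq (by rw [hpart, hcompl]) ?_
      rw [avoid_part_parts E (mem_univ x₀), hpart]
      show (insert (univ \ s) Q.parts).erase (univ \ s) = Q.parts
      rw [Finset.erase_insert hnotmem]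

/-- The `n`-th Bell number: the number of partitions of an `n`-element set
into nonempty blocks. -/
noncomputable def bell (n : ℕ) : ℕ :=
  Fintype.card (Finpartition (Finset.univ : Finset (Fin n)))

lemma card_finpartition_eq_bell {γ : Type*} [DecidableEq γ] (s : Finset γ) :
    Fintype.card (Finpartition s) = bell s.card :=
  card_finpartition_congr (by simp)

lemma bell_zero : bell 0 = 1 := by
  rw [bell, Fintype.card_eq_one_iff]
  have h : ∀ Q : Finpartition (univ : Finset (Fin 0)), Q.parts = ∅ := fun Q =>
    (Finpartition.parts_eq_empty_iff (P := Q)).mpr (by simp)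
  exact ⟨(Finpartition.empty _).copy (by simp),
    fun P => Finpartition.ext ((h P).trans (h _).symm)⟩

lemma bell_rec (n : ℕ) :
    bell (n + 1) = ∑ j ∈ Finset.range (n + 1), n.choose j * bell j := by
  have h1 := Fintype.card_congr (finpartRec (Fin.last n))
  have h2 : Fintype.card (Σ s : {s : Finset (Fin (n+1)) // Fin.last n ∉ s},
      Finpartition s.val) = ∑ s : {s : Finset (Fin (n+1)) // Fin.last n ∉ s},
      Fintype.card (Finpartition s.val) := Fintype.card_sigma
  have h3 : ∑ s : {s : Finset (Fin (n+1)) // Fin.last n ∉ s},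
        Fintype.card (Finpartition s.val)
      = ∑ s ∈ ((univ : Finset (Fin (n+1))).erase (Fin.last n)).powerset,
        Fintype.card (Finpartition s) := by
    exact (Finset.sum_subtype _ (fun s => by simp [Finset.subset_erase])
      (fun s => Fintype.card (Finpartition s))).symm
  have h4 : ∀ s ∈ ((univ : Finset (Fin (n+1))).erase (Fin.last n)).powerset,
      Fintype.card (Finpartition s) = bell s.card :=
    fun s _ => card_finpartition_eq_bell s
  have hcard : (((univ : Finset (Fin (n+1))).erase (Fin.last n)).card) = n := by
    rw [Finset.card_erase_of_mem (mem_univ _)]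
    simp
  calc bell (n + 1) = _ := by rw [bell, h1, h2, h3, Finset.sum_congr rfl h4]
    _ = ∑ j ∈ Finset.range (n + 1), n.choose j * bell j := by
      rw [Finset.sum_powerset]
      rw [hcard]
      refine Finset.sum_congr rfl fun j hj => ?_
      rw [Finset.sum_congr rfl (fun t ht => by
        rw [(Finset.mem_powersetCard.1 ht).2]), Finset.sum_const,
        Finset.card_powersetCard, hcard, smul_eq_mul]

local notation "g" => fun (n k : ℕ) => (k : ℝ) ^ n / (Nat.factorial k : ℝ)

lemma g_succ_succ (n k : ℕ) :
    ((k + 1 : ℕ) : ℝ) ^ (n + 1) / (Nat.factorial (k + 1) : ℝ)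
      = ∑ j ∈ Finset.range (n + 1), (n.choose j : ℝ) * ((k : ℝ) ^ j / (Nat.factorial k : ℝ)) := by
  have hk : ((k : ℝ) + 1) ≠ 0 := by positivity
  have h1 : ((k + 1 : ℕ) : ℝ) ^ (n + 1) / (Nat.factorial (k + 1) : ℝ)
      = ((k : ℝ) + 1) ^ n / (Nat.factorial k : ℝ) := by
    rw [Nat.factorial_succ]
    push_cast
    rw [pow_succ]
    field_simp
  rw [h1, add_pow]
  simp only [one_pow, mul_one]
  rw [Finset.sum_div]
  exact Finset.sum_congr rfl fun j hj => by ring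

lemma main_aux : ∀ n : ℕ, Summable (fun k : ℕ => (k : ℝ) ^ n / (Nat.factorial k : ℝ)) ∧
    (∑' k : ℕ, (k : ℝ) ^ n / (Nat.factorial k : ℝ)) = (bell n : ℝ) * Real.exp 1 := by
  intro n
  induction n using Nat.strong_induction_on with
  | _ n ih =>
    match n with
    | 0 =>
      have hs : Summable (fun k : ℕ => (k : ℝ) ^ 0 / (Nat.factorial k : ℝ)) := by
        simpa using Real.summable_pow_div_factorial 1
      refine ⟨hs, ?_⟩
      have : Real.exp 1 = ∑' k : ℕ, (1 : ℝ) ^ k / (Nat.factorial k : ℝ) := by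
        rw [Real.exp_eq_exp_ℝ, NormedSpace.exp_eq_tsum_div]
      rw [bell_zero, this]
      push_cast
      simp
    | n + 1 =>
      have ihs : ∀ j, j ≤ n → Summable (fun k : ℕ => (k : ℝ) ^ j / (Nat.factorial k : ℝ)) :=
        fun j hj => (ih j (Nat.lt_succ_of_le hj)).1
      have hsum_shift : Summable (fun k : ℕ =>
          ((k + 1 : ℕ) : ℝ) ^ (n + 1) / (Nat.factorial (k + 1) : ℝ)) := by
        rw [funext (g_succ_succ n)]
        exact summable_sum fun j hj => (Summable.mul_left _
          (ihs j (Nat.lt_succ_iff.mp (Finset.mem_range.mp hj))))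
      have hs : Summable (fun k : ℕ => (k : ℝ) ^ (n + 1) / (Nat.factorial k : ℝ)) :=
        (summable_nat_add_iff 1).mp hsum_shift
      refine ⟨hs, ?_⟩
      rw [Summable.tsum_eq_zero_add hs]
      simp only [Nat.cast_zero, Nat.factorial_zero, Nat.cast_one]
      rw [zero_pow (Nat.succ_ne_zero n), zero_div, zero_add]
      push_cast
      calc (∑' k : ℕ, ((k : ℝ) + 1) ^ (n + 1) / (Nat.factorial (k + 1) : ℝ))
          = ∑' k : ℕ, ∑ j ∈ Finset.range (n + 1),
              (n.choose j : ℝ) * ((k : ℝ) ^ j / (Nat.factorial k : ℝ)) := by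
            refine tsum_congr fun k => ?_
            have := g_succ_succ n k
            push_cast at this
            exact this
        _ = ∑ j ∈ Finset.range (n + 1), ∑' k : ℕ,
              (n.choose j : ℝ) * ((k : ℝ) ^ j / (Nat.factorial k : ℝ)) := by
            exact (Summable.tsum_finsetSum fun j hj => Summable.mul_left _
              (ihs j (Nat.lt_succ_iff.mp (Finset.mem_range.mp hj))))
        _ = (bell (n + 1) : ℝ) * Real.exp 1 := by
            have hcong : ∀ j ∈ Finset.range (n + 1),
                (∑' k : ℕ, (n.choose j : ℝ) * ((k : ℝ) ^ j / (Nat.factorial k : ℝ)))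
                  = (n.choose j : ℝ) * ((bell j : ℝ) * Real.exp 1) := fun j hj => by
              rw [tsum_mul_left, (ih j (Finset.mem_range.mp hj)).2]
            rw [Finset.sum_congr rfl hcong, bell_rec n]
            push_cast
            rw [Finset.sum_mul]
            exact Finset.sum_congr rfl fun j hj => by ring

/-- Dobinski formula: `B_n = e⁻¹ · Σ_{k ≥ 0} kⁿ / k!`, the series being convergent. -/
theorem dobinski (n : ℕ) :
    Summable (fun k : ℕ => (k : ℝ) ^ n / (Nat.factorial k : ℝ)) ∧
      (bell n : ℝ) = Real.exp (-1) * ∑' k : ℕ, (k : ℝ) ^ n / (Nat.factorial k : ℝ) := by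
  refine ⟨(main_aux n).1, ?_⟩
  rw [(main_aux n).2, Real.exp_neg]
  rw [← mul_assoc, mul_comm ((Real.exp 1)⁻¹), mul_assoc,
    inv_mul_cancel₀ (Real.exp_ne_zero 1), mul_one]
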